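/- Let I ⊆ ℝ be an open interval with 0 ∈ I, let m ≥ 2 be an integer, a ∈ ℝ, and let g : I → ℝ be smooth with g(t) > 0 for all t ∈ I. Suppose f, λ : I → ℝ are smooth and satisfy the system f'(t)·g'(t)/g(t) = λ(t) + (m−1)·(g'(t)/g(t))² + g''(t)/g(t) + (m−1)·a/g(t)² and f''(t) = λ(t) + m·g''(t)/g(t) for all t ∈ I. Then there exist constants A, B ∈ ℝ (namely A = f'(0)/g(0) and B = f(0)) such that for all t ∈ I: f(t) = B + ∫₀ᵗ g(s)·[A + (m−1)·∫₀ˢ (g''(x)g(x) − g'(x)² − a)/g(x)³ dx] ds and λ(t) = −(m−1)·(g'(t)² + a)/g(t)² − g''(t)/g(t) + g'(t)·[A + (m−1)·∫₀ᵗ (g''(x)g(x) − g'(x)² − a)/g(x)³ dx]. -/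

import Mathlib

/- STATEMENT 13: integration of system (1.40) of Section 1: on an open interval
I ∋ 0, if f'·g'/g = λ + (m-1)(g'/g)² + g''/g + (m-1)a/g² and
f'' = λ + m·g''/g, then with A = f'(0)/g(0) and B = f(0) one has
f(t) = B + ∫₀ᵗ g(s)·[A + (m-1)∫₀ˢ (g''g - g'² - a)/g³] ds and
λ(t) = -(m-1)(g'² + a)/g² - g''/g + g'·[A + (m-1)∫₀ᵗ (g''g - g'² - a)/g³]. -/
theorem stmt_13
    (I : Set ℝ) (hIopen : IsOpen I) (hIconn : Set.OrdConnected I)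
    (h0I : (0:ℝ) ∈ I)
    (m : ℕ) (hm : 2 ≤ m) (a : ℝ)
    (g g' g'' : ℝ → ℝ)
    (hgderiv : ∀ t ∈ I, HasDerivAt g (g' t) t)
    (hg'deriv : ∀ t ∈ I, HasDerivAt g' (g'' t) t)
    (hg''cont : ContinuousOn g'' I)
    (hgpos : ∀ t ∈ I, 0 < g t)
    (f f' f'' lam : ℝ → ℝ)
    (hfderiv : ∀ t ∈ I, HasDerivAt f (f' t) t)
    (hf'deriv : ∀ t ∈ I, HasDerivAt f' (f'' t) t)
    (hf''cont : ContinuousOn f'' I)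
    (heq1 : ∀ t ∈ I, f' t * g' t / g t
      = lam t + ((m : ℝ) - 1) * (g' t / g t) ^ 2 + g'' t / g t
        + ((m : ℝ) - 1) * a / g t ^ 2)
    (heq2 : ∀ t ∈ I, f'' t = lam t + (m : ℝ) * g'' t / g t) :
    ∀ t ∈ I,
      f t = f 0 + (∫ s in (0:ℝ)..t, g s * (f' 0 / g 0
          + ((m : ℝ) - 1) * ∫ x in (0:ℝ)..s,
              (g'' x * g x - g' x ^ 2 - a) / g x ^ 3)) ∧
      lam t = -((m : ℝ) - 1) * (g' t ^ 2 + a) / g t ^ 2 - g'' t / g t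
          + g' t * (f' 0 / g 0
            + ((m : ℝ) - 1) * ∫ x in (0:ℝ)..t,
                (g'' x * g x - g' x ^ 2 - a) / g x ^ 3) := by

  have hgcont : ContinuousOn g I := fun t ht => (hgderiv t ht).continuousAt.continuousWithinAt
  have hg'cont : ContinuousOn g' I := fun t ht => (hg'deriv t ht).continuousAt.continuousWithinAt
  have hf'cont : ContinuousOn f' I := fun t ht => (hf'deriv t ht).continuousAt.continuousWithinAt
  have hφcont : ContinuousOn (fun x => (g'' x * g x - g' x ^ 2 - a) / g x ^ 3) I := by
    apply ContinuousOn.div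
    · exact ((hg''cont.mul hgcont).sub (hg'cont.pow 2)).sub continuousOn_const
    · exact hgcont.pow 3
    · intro t ht
      exact pow_ne_zero 3 (hgpos t ht).ne'
  have hq : ∀ x ∈ I, HasDerivAt (fun t => f' t / g t)
      (((m:ℝ)-1) * ((g'' x * g x - g' x ^ 2 - a) / g x ^ 3)) x := by
    intro x hx
    have hg0 : g x ≠ 0 := (hgpos x hx).ne'
    have h := (hf'deriv x hx).div (hgderiv x hx) hg0
    refine h.congr_deriv ?_
    have e1 := heq1 x hx
    have e2 := heq2 x hx
    rw [e2, show lam x = f' x * g' x / g x - (((m:ℝ)-1) * (g' x / g x) ^ 2 + g'' x / g x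
      + ((m:ℝ)-1) * a / g x ^ 2) by linarith [e1]]
    field_simp
    ring
  have key : ∀ s ∈ I, f' s / g s = f' 0 / g 0
      + ((m:ℝ)-1) * ∫ x in (0:ℝ)..s, (g'' x * g x - g' x ^ 2 - a) / g x ^ 3 := by
    intro s hs
    have hsub : Set.uIcc (0:ℝ) s ⊆ I := hIconn.uIcc_subset h0I hs
    have hint : IntervalIntegrable
        (fun x => ((m:ℝ)-1) * ((g'' x * g x - g' x ^ 2 - a) / g x ^ 3))
        MeasureTheory.volume 0 s :=
      ((continuousOn_const.mul hφcont).mono hsub).intervalIntegrable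
    have h := intervalIntegral.integral_eq_sub_of_hasDerivAt
      (fun x hx => hq x (hsub hx)) hint
    rw [intervalIntegral.integral_const_mul] at h
    linarith [h]
  intro t ht
  have hsub : Set.uIcc (0:ℝ) t ⊆ I := hIconn.uIcc_subset h0I ht
  constructor
  · have h1 : ∫ s in (0:ℝ)..t, f' s = f t - f 0 :=
      intervalIntegral.integral_eq_sub_of_hasDerivAt (fun x hx => hfderiv x (hsub hx))
        ((hf'cont.mono hsub).intervalIntegrable)
    have h2 : (∫ s in (0:ℝ)..t, g s * (f' 0 / g 0
          + ((m : ℝ) - 1) * ∫ x in (0:ℝ)..s,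
              (g'' x * g x - g' x ^ 2 - a) / g x ^ 3))
        = ∫ s in (0:ℝ)..t, f' s := by
      apply intervalIntegral.integral_congr
      intro s hs
      have hsI := hsub hs
      have hg0 : g s ≠ 0 := (hgpos s hsI).ne'
      simp only
      rw [← key s hsI]
      field_simp
    rw [h2, h1]; ring
  · have e1 := heq1 t ht
    have k := key t ht
    have hg0 : g t ≠ 0 := (hgpos t ht).ne'
    have hf't : f' t = g t * (f' 0 / g 0
        + ((m : ℝ) - 1) * ∫ x in (0:ℝ)..t, (g'' x * g x - g' x ^ 2 - a) / g x ^ 3) := by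
      rw [← k]; field_simp
    rw [hf't] at e1
    have hcanc : g t * (f' 0 / g 0
        + ((m : ℝ) - 1) * ∫ x in (0:ℝ)..t, (g'' x * g x - g' x ^ 2 - a) / g x ^ 3) * g' t / g t
        = (f' 0 / g 0
        + ((m : ℝ) - 1) * ∫ x in (0:ℝ)..t, (g'' x * g x - g' x ^ 2 - a) / g x ^ 3) * g' t := by
      rw [mul_assoc, mul_div_cancel_left₀ _ hg0]
    linear_combination -e1 + hcanc
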